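/- Let f(t) = t - t^{p+1} + O(t^{2p+1}) be holomorphic near 0, let Φ(t) = t^{-p}, Ψ_k the inverse branch of Φ mapping into the sector S_k, and v := Φ ∘ f ∘ Ψ_k the conjugated map near infinity. Then v(w) = w + p + O(|w|^{-1/p}) as |w| → ∞ in the region Π(a) = {x + iy : y² > 1/a² - 2x/a} for a > 0 small. -/

import Mathlib

open Filter Topology Asymptotics

/-- The petal `Π_k(a) = {r e^{iθ} : 0 < r^p < a(1 + cos(pθ)), |2kπ/p - θ| < π/p}`. -/
def petal (p : ℕ) (k : ℤ) (a : ℝ) : Set ℂ :=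
  {z | ∃ r θ : ℝ, 0 < r ∧ z = (r : ℂ) * Complex.exp (θ * Complex.I) ∧
    r ^ p < a * (1 + Real.cos (p * θ)) ∧ |2 * k * Real.pi / p - θ| < Real.pi / p}

/-- For `f t = t - t^(p+1) + O(t^(2p+1))`, in the coordinate
`w = Φ(t) = t^(-p)` the conjugated map `v = Φ ∘ f ∘ Ψ_k` satisfies
`v w = w + p + O(|w|^(-1/p))` on the image `Π(a)` of a small petal; equivalently,
for `t` in the petal `Π_k(a)` with `a > 0` small, `(f t)^(-p) = t^(-p) + p + O(|t|)`
(note `|Φ(t)|^(-1/p) = |t|`). -/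
lemma exists_Q (p : ℕ) : ∃ Q : ℂ → ℂ, ∃ B : ℝ, 0 ≤ B ∧
    (∀ v : ℂ, (1 - v) ^ p = 1 - p * v + v ^ 2 * Q v) ∧
    (∀ v : ℂ, ‖v‖ ≤ 1 → ‖Q v‖ ≤ B) := by
  induction p with
  | zero => exact ⟨0, 0, le_refl _, by intro v; simp, by simp⟩
  | succ p ih =>
    obtain ⟨Q, B, hB, hQ, hQb⟩ := ih
    refine ⟨fun v => Q v + p - v * Q v, 2 * B + p, by positivity, ?_, ?_⟩
    · intro v
      have hq := hQ v
      rw [pow_succ]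
      push_cast
      linear_combination (1 - v) * hq
    · intro v hv
      have h1 := hQb v hv
      have h0 : (0:ℝ) ≤ ‖Q v‖ := norm_nonneg _
      calc ‖Q v + p - v * Q v‖
          ≤ ‖Q v + p‖ + ‖v * Q v‖ := by
            simpa using norm_sub_le (Q v + (p:ℂ)) (v * Q v)
        _ ≤ (‖Q v‖ + ‖((p:ℕ) : ℂ)‖) + ‖v‖ * ‖Q v‖ := by
            rw [norm_mul]; gcongr; exact norm_add_le _ _
        _ ≤ (B + p) + 1 * B := by
            have : ‖((p:ℕ) : ℂ)‖ = p := by simp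
            rw [this]; gcongr
        _ = 2 * B + p := by ring

set_option maxHeartbeats 1000000 in
theorem stmt_4 (f : ℂ → ℂ) (p : ℕ) (k : ℤ) (hp : 1 ≤ p)
    (hf : AnalyticAt ℂ f 0) (hf0 : f 0 = 0)
    (hfexp : (fun t => f t - t + t ^ (p + 1)) =O[𝓝 0] fun t => t ^ (2 * p + 1)) :
    ∃ a : ℝ, 0 < a ∧ ∃ C : ℝ, 0 < C ∧
      ∀ t ∈ petal p k a,
        ‖(f t) ^ (-(p : ℤ)) - t ^ (-(p : ℤ)) - p‖ ≤ C * ‖t‖ := by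
  obtain ⟨Q, B, hB, hQ, hQb⟩ := exists_Q p
  obtain ⟨c, hc⟩ := hfexp.bound
  rw [Metric.eventually_nhds_iff] at hc
  obtain ⟨ε, hε, hcb⟩ := hc
  set C₂ : ℝ := max c 0 with hC₂def
  have hC₂ : 0 ≤ C₂ := le_max_right _ _
  set δ : ℝ := min (ε/2) (min (1/4) (1/(C₂+1))) with hδdef
  have hδpos : 0 < δ := by
    apply lt_min (by linarith)
    apply lt_min (by norm_num)
    positivity
  have hδε : δ < ε := lt_of_le_of_lt (min_le_left _ _) (by linarith)
  have hδ1 : δ ≤ 1/4 := le_trans (min_le_right _ _) (min_le_left _ _)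
  have hδC : δ ≤ 1/(C₂+1) := le_trans (min_le_right _ _) (min_le_right _ _)
  have hC₃' : 0 ≤ (p:ℝ)*C₂ + 2*p^2 + 4*B*(1+p) := by
    have h4B : 0 ≤ 4*B*(1+(p:ℝ)) :=
      mul_nonneg (mul_nonneg (by norm_num) hB) (by positivity)
    have h1 : 0 ≤ (p:ℝ)*C₂ := by positivity
    have h2 : 0 ≤ 2*(p:ℝ)^2 := by positivity
    linarith
  refine ⟨δ^p/2, by positivity, ((p:ℝ)*C₂ + 2*p^2 + 4*B*(1+p)) * 2^p + 1, ?_, ?_⟩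
  · have h2p : (0:ℝ) < 2^p := by positivity
    nlinarith
  rintro t ⟨r, θ, hr, rfl, hrp, -⟩
  set t : ℂ := (r : ℂ) * Complex.exp (θ * Complex.I) with ht_def
  have habs : ‖t‖ = r := by
    rw [ht_def, norm_mul, Complex.norm_exp_ofReal_mul_I, mul_one, Complex.norm_real, Real.norm_eq_abs,
      abs_of_pos hr]
  have hrδ : r < δ := by
    have h2 : r^p < δ^p := by
      have hc1 := Real.cos_le_one ((p:ℝ)*θ)
      have hd : (0:ℝ) < δ^p := by positivity
      nlinarith
    exact lt_of_pow_lt_pow_left₀ p hδpos.le h2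
  set A : ℝ := ‖t‖ with hA_def
  have hA0 : 0 < A := by rw [habs]; exact hr
  have ht0 : t ≠ 0 := by
    rw [ht_def]
    exact mul_ne_zero (by exact_mod_cast hr.ne') (Complex.exp_ne_zero _)
  have hAδ : A < δ := by rw [habs]; exact hrδ
  have hA1 : A ≤ 1 := by linarith
  have hApA : A^p ≤ A := by
    calc A^p ≤ A^1 := pow_le_pow_of_le_one hA0.le hA1 hp
    _ = A := pow_one A
  have hAp1 : A^p ≤ 1 := pow_le_one₀ hA0.le hA1
  -- the error term
  set e : ℂ := f t - t + t^(p+1) with he_def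
  have heA : ‖e‖ ≤ C₂ * A^(2*p+1) := by
    have hd : dist t 0 < ε := by
      rw [dist_zero_right]
      exact lt_trans hAδ hδε
    have := hcb hd
    calc ‖e‖ ≤ c * ‖t^(2*p+1)‖ := this
      _ ≤ C₂ * A^(2*p+1) := by
        rw [norm_pow]
        have : (0:ℝ) ≤ A^(2*p+1) := by positivity
        exact mul_le_mul_of_nonneg_right (le_max_left _ _) this
  set u : ℂ := t^p - e/t with hu_def
  have hfu : f t = t * (1 - u) := by
    rw [hu_def, he_def]
    field_simp
    ring
  have heu : ‖e/t‖ ≤ C₂ * (A^p * A^p) := by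
    rw [norm_div, ← hA_def, div_le_iff₀ hA0]
    calc ‖e‖ ≤ C₂ * A^(2*p+1) := heA
      _ = C₂ * (A^p * A^p) * A := by rw [two_mul, pow_add, pow_add, pow_one]; ring
  have hC₂A : C₂ * A^p ≤ 1 := by
    have h1 : C₂ * A^p ≤ C₂ * δ := by
      apply mul_le_mul_of_nonneg_left _ hC₂
      linarith
    have h2 : C₂ * δ ≤ C₂ * (1/(C₂+1)) := mul_le_mul_of_nonneg_left hδC hC₂
    have h3 : C₂ * (1/(C₂+1)) ≤ 1 := by
      rw [mul_one_div]
      exact div_le_one_of_le₀ (by linarith) (by positivity)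
    linarith
  have hub : ‖u‖ ≤ 2 * A^p := by
    have h1 : ‖u‖ ≤ ‖t^p‖ + ‖e/t‖ := by
      rw [hu_def]
      simpa using norm_sub_le (t^p) (e/t)
    rw [norm_pow, ← hA_def] at h1
    have hAp0 : (0:ℝ) ≤ A^p := by positivity
    nlinarith
  have hu12 : ‖u‖ ≤ 1/2 := by
    calc ‖u‖ ≤ 2 * A^p := hub
      _ ≤ 2 * A := by linarith
      _ ≤ 1/2 := by linarith
  have h1u : (1:ℝ)/2 ≤ ‖1 - u‖ := by
    have h := norm_sub_norm_le (1:ℂ) u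
    simp only [norm_one] at h
    linarith
  have h1u0 : (1:ℂ) - u ≠ 0 := by
    intro h
    rw [h, norm_zero] at h1u
    linarith
  set T : ℂ := t^p with hT_def
  set V : ℂ := (1-u)^p with hV_def
  have hT0 : T ≠ 0 := pow_ne_zero p ht0
  have hV0 : V ≠ 0 := pow_ne_zero p h1u0
  have hTabs : ‖T‖ = A^p := by rw [hT_def, norm_pow, ← hA_def]
  clear_value t A e u T V
  have hfz : (f t) ^ (-(p:ℤ)) - t ^ (-(p:ℤ)) - (p:ℂ) = T⁻¹ * V⁻¹ - T⁻¹ - (p:ℂ) := by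
    rw [hfu, mul_zpow]
    simp only [zpow_neg, zpow_natCast]
    rw [← hT_def, ← hV_def]
  have hXeq : T⁻¹ * V⁻¹ - T⁻¹ - (p:ℂ) = (1 - V - p*T*V) / (T*V) := by
    field_simp
  have hq := hQ u
  rw [← hV_def] at hq
  have hu_T : u - T = -(e/t) := by rw [hu_def]; ring
  have hYeq : 1 - V - (p:ℂ)*T*V
      = (p:ℂ)*(u - T) + (p:ℂ)^2*T*u - u^2*Q u*(1 + p*T) := by
    linear_combination (-(1 + (p:ℂ)*T)) * hq
  have h1 : ‖(p:ℂ)*(u - T)‖ ≤ (p:ℝ) * (C₂ * (A^p * A^p)) := by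
    rw [norm_mul, hu_T, norm_neg, Complex.norm_natCast]
    exact mul_le_mul_of_nonneg_left heu (Nat.cast_nonneg p)
  have h2 : ‖(p:ℂ)^2*T*u‖ ≤ 2*(p:ℝ)^2*(A^p * A^p) := by
    rw [norm_mul, norm_mul, norm_pow, Complex.norm_natCast, hTabs]
    calc (p:ℝ)^2 * A^p * ‖u‖ ≤ (p:ℝ)^2 * A^p * (2*A^p) := by
          gcongr
      _ = 2*(p:ℝ)^2*(A^p * A^p) := by ring
  have h3 : ‖u^2*Q u*(1 + (p:ℂ)*T)‖ ≤ 4*B*(1+(p:ℝ))*(A^p * A^p) := by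
    rw [norm_mul, norm_mul, norm_pow]
    have hQu : ‖Q u‖ ≤ B := hQb u (by linarith)
    have h1pT : ‖1 + (p:ℂ)*T‖ ≤ 1 + (p:ℝ) := by
      calc ‖1 + (p:ℂ)*T‖
          ≤ ‖1‖ + ‖(p:ℂ)*T‖ := norm_add_le _ _
        _ = 1 + (p:ℝ) * A^p := by rw [norm_one, norm_mul, Complex.norm_natCast, hTabs]
        _ ≤ 1 + (p:ℝ) * 1 := by
            have : (p:ℝ) * A^p ≤ (p:ℝ) * 1 :=
              mul_le_mul_of_nonneg_left hAp1 (Nat.cast_nonneg p)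
            linarith
        _ = 1 + (p:ℝ) := by ring
    have hAp0 : (0:ℝ) ≤ A^p := by positivity
    have hu0 : (0:ℝ) ≤ ‖u‖ := norm_nonneg _
    have hQ0 : (0:ℝ) ≤ ‖Q u‖ := norm_nonneg _
    calc ‖u‖^2 * ‖Q u‖ * ‖1 + (p:ℂ)*T‖
        ≤ (2*A^p)^2 * B * (1+(p:ℝ)) := by
          apply mul_le_mul (mul_le_mul (by nlinarith) hQu hQ0 (by positivity)) h1pT
            (norm_nonneg _)
          positivity
      _ = 4*B*(1+(p:ℝ))*(A^p * A^p) := by ring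
  have habsY : ‖1 - V - (p:ℂ)*T*V‖
      ≤ ((p:ℝ)*C₂ + 2*p^2 + 4*B*(1+p)) * (A^p * A^p) := by
    rw [hYeq]
    calc ‖(p:ℂ)*(u - T) + (p:ℂ)^2*T*u - u^2*Q u*(1 + p*T)‖
        ≤ ‖(p:ℂ)*(u - T) + (p:ℂ)^2*T*u‖
            + ‖u^2*Q u*(1 + (p:ℂ)*T)‖ := by
          rw [sub_eq_add_neg]
          refine le_trans (norm_add_le _ _) ?_
          rw [norm_neg]
      _ ≤ (‖(p:ℂ)*(u - T)‖ + ‖(p:ℂ)^2*T*u‖)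
            + ‖u^2*Q u*(1 + (p:ℂ)*T)‖ := by
          gcongr
          exact norm_add_le _ _
      _ ≤ ((p:ℝ) * (C₂ * (A^p * A^p)) + 2*(p:ℝ)^2*(A^p * A^p))
            + 4*B*(1+(p:ℝ))*(A^p * A^p) := by gcongr <;> linarith
      _ = ((p:ℝ)*C₂ + 2*p^2 + 4*B*(1+p)) * (A^p * A^p) := by ring
  have hTV : A^p * (1/2)^p ≤ ‖T*V‖ := by
    rw [norm_mul, hTabs, hV_def, norm_pow]
    exact mul_le_mul_of_nonneg_left (pow_le_pow_left₀ (by norm_num) h1u p) (by positivity)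
  have hTV0 : (0:ℝ) < A^p * (1/2)^p := by positivity
  rw [hfz, hXeq, norm_div]
  calc ‖1 - V - (p:ℂ)*T*V‖ / ‖T*V‖
      ≤ (((p:ℝ)*C₂ + 2*p^2 + 4*B*(1+p)) * (A^p * A^p)) / (A^p * (1/2)^p) := by
        apply div_le_div₀ _ habsY hTV0 hTV
        positivity
    _ = ((p:ℝ)*C₂ + 2*p^2 + 4*B*(1+p)) * 2^p * A^p := by
        have hhalf : ((1:ℝ)/2)^p * 2^p = 1 := by
          rw [← mul_pow]; norm_num
        rw [div_eq_iff (ne_of_gt hTV0)]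
        linear_combination (-(((p:ℝ)*C₂ + 2*(p:ℝ)^2 + 4*B*(1+(p:ℝ))) * (A^p*A^p))) * hhalf
    _ ≤ (((p:ℝ)*C₂ + 2*p^2 + 4*B*(1+p)) * 2^p + 1) * A := by
        have h2p : (0:ℝ) ≤ 2^p := by positivity
        have hh := mul_le_mul_of_nonneg_left hApA (mul_nonneg hC₃' h2p)
        nlinarith [hA0.le]
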